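/- Assume Δna ≠ 0 and ‖Δna‖ < r + r′. Then h is (left-)differentiable at α = 1 within [0,1], and its derivative there equals √ρ̃a · (‖Δna‖ − (r + r′) − ⟨Δna, Δna − Δnb⟩/‖Δna‖). In particular, the sign of the derivative of h at 1 equals the sign of ‖Δna‖ − (r + r′) − ⟨Δna, Δna − Δnb⟩/‖Δna‖. -/

import Mathlib

open Set
open scoped RealInnerProductSpace

/-- Left derivative of `h` at `α = 1` within `[0,1]`, and its sign
(the "easy case" test at `α = 1`). -/
theorem stmt_12
    (d : ℕ) (hd : 1 ≤ d)
    (Δna Δnb : EuclideanSpace ℝ (Fin d))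
    (r r' : ℝ) (hr : 0 < r) (hr' : 0 < r')
    (ρta ρtb : ℝ) (hρta : 0 < ρta) (hρtb : 0 < ρtb)
    (h : ℝ → ℝ)
    (hh : ∀ β : ℝ, h β = max 0
      (((r + r') - ‖β • Δna + (1 - β) • Δnb‖) /
        Real.sqrt (β ^ 2 / ρta + (1 - β) ^ 2 / ρtb)))
    (hΔna : Δna ≠ 0) (hlt : ‖Δna‖ < r + r') :
    HasDerivWithinAt h
      (Real.sqrt ρta * (‖Δna‖ - (r + r') - ⟪Δna, Δna - Δnb⟫ / ‖Δna‖))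
      (Icc (0 : ℝ) 1) 1 ∧
    Real.sign (derivWithin h (Icc (0 : ℝ) 1) 1) =
      Real.sign (‖Δna‖ - (r + r') - ⟪Δna, Δna - Δnb⟫ / ‖Δna‖) := by
  have hna : (0:ℝ) < ‖Δna‖ := norm_pos_iff.mpr hΔna
  set X : ℝ := ‖Δna‖ - (r + r') - ⟪Δna, Δna - Δnb⟫ / ‖Δna‖ with hXdef
  set s : ℝ := Real.sqrt ρta with hsdef
  have hs : 0 < s := Real.sqrt_pos.mpr hρta
  have hs2 : s ^ 2 = ρta := Real.sq_sqrt hρta.le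
  set c : ℝ → EuclideanSpace ℝ (Fin d) := fun β => β • Δna + (1 - β) • Δnb with hcdef
  have hc1 : c 1 = Δna := by simp [hcdef]
  -- derivative of the curve c at 1
  have hcd : HasDerivAt c (Δna - Δnb) 1 := by
    have h1 : HasDerivAt (fun β : ℝ => β • Δna) ((1:ℝ) • Δna) 1 :=
      (hasDerivAt_id 1).smul_const Δna
    have h2 : HasDerivAt (fun β : ℝ => (1 - β) • Δnb) ((-1:ℝ) • Δnb) 1 :=
      (((hasDerivAt_id 1).const_sub 1)).smul_const Δnb
    have := h1.add h2
    exact this.congr_deriv (by simp [sub_eq_add_neg])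
  -- derivative of the norm of the curve
  have hsq : HasDerivAt (fun β => ‖c β‖ ^ 2) (2 * ⟪Δna, Δna - Δnb⟫) 1 := by
    simpa [hc1] using hcd.norm_sq
  have hsq0 : ‖c 1‖ ^ 2 ≠ 0 := by
    rw [hc1]; positivity
  have hnorm : HasDerivAt (fun β => ‖c β‖) (⟪Δna, Δna - Δnb⟫ / ‖Δna‖) 1 := by
    have := hsq.sqrt hsq0
    have heq : (fun β => Real.sqrt (‖c β‖ ^ 2)) = fun β => ‖c β‖ :=
      funext fun β => Real.sqrt_sq (norm_nonneg _)
    rw [heq] at this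
    convert this using 1
    rw [hc1, Real.sqrt_sq (norm_nonneg _)]
    field_simp
  -- numerator
  have hN : HasDerivAt (fun β => (r + r') - ‖c β‖) (-(⟪Δna, Δna - Δnb⟫ / ‖Δna‖)) 1 :=
    hnorm.const_sub (r + r')
  -- denominator inside sqrt
  have hu : HasDerivAt (fun β : ℝ => β ^ 2 / ρta + (1 - β) ^ 2 / ρtb) (2 / ρta) 1 := by
    have h1 : HasDerivAt (fun β : ℝ => β ^ 2 / ρta) (2 / ρta) 1 := by
      have := (hasDerivAt_pow 2 (1:ℝ)).div_const ρta
      simpa using this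
    have h2 : HasDerivAt (fun β : ℝ => (1 - β) ^ 2 / ρtb) 0 1 := by
      have hb : HasDerivAt (fun β : ℝ => (1 - β)) (-1) 1 := (hasDerivAt_id 1).const_sub 1
      have := (hb.pow 2).div_const ρtb
      simpa using this
    exact (h1.add h2).congr_deriv (add_zero _)
  have hu1 : (1:ℝ) ^ 2 / ρta + (1 - 1) ^ 2 / ρtb = 1 / ρta := by norm_num
  have hu1ne : (1:ℝ) ^ 2 / ρta + (1 - 1) ^ 2 / ρtb ≠ 0 := by
    rw [hu1]; positivity
  have hD : HasDerivAt (fun β : ℝ => Real.sqrt (β ^ 2 / ρta + (1 - β) ^ 2 / ρtb))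
      ((2 / ρta) / (2 * Real.sqrt ((1:ℝ) ^ 2 / ρta + (1 - 1) ^ 2 / ρtb))) 1 :=
    hu.sqrt hu1ne
  have hD1 : Real.sqrt ((1:ℝ) ^ 2 / ρta + (1 - 1) ^ 2 / ρtb) = 1 / s := by
    rw [hu1, hsdef, one_div, one_div, ← Real.sqrt_inv]
  have hDne : Real.sqrt ((1:ℝ) ^ 2 / ρta + (1 - 1) ^ 2 / ρtb) ≠ 0 := by
    rw [hD1]; positivity
  -- quotient
  set g : ℝ → ℝ := fun β =>
    ((r + r') - ‖c β‖) / Real.sqrt (β ^ 2 / ρta + (1 - β) ^ 2 / ρtb) with hgdef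
  have hg : HasDerivAt g (s * X) 1 := by
    have := hN.div hD hDne
    refine this.congr_deriv ?_
    symm
    rw [hc1, hD1, hXdef]
    have hρne : ρta ≠ 0 := hρta.ne'
    field_simp
    rw [← hs2]
    ring
  have hg1 : g 1 = ((r + r') - ‖Δna‖) * s := by
    rw [hgdef]
    simp only [hc1, hD1]
    field_simp
  have hg1pos : 0 < g 1 := by
    rw [hg1]
    exact mul_pos (by linarith) hs
  -- eventually h = g near 1
  have hcont : ContinuousAt g 1 := hg.continuousAt
  have hev : ∀ᶠ β in nhds 1, h β = g β := by
    have hmem : g ⁻¹' Ioi 0 ∈ nhds (1:ℝ) := hcont (Ioi_mem_nhds hg1pos)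
    filter_upwards [hmem] with β hβ
    rw [hh β, hgdef]
    exact max_eq_right (le_of_lt hβ)
  have hhg1 : h 1 = g 1 := hev.self_of_nhds
  have hmain : HasDerivWithinAt h (s * X) (Icc (0:ℝ) 1) 1 := by
    refine (hg.hasDerivWithinAt).congr_of_eventuallyEq ?_ hhg1
    exact hev.filter_mono nhdsWithin_le_nhds
  refine ⟨hmain, ?_⟩
  have hder : derivWithin h (Icc (0:ℝ) 1) 1 = s * X :=
    hmain.derivWithin ((uniqueDiffOn_Icc one_pos) 1 (right_mem_Icc.mpr zero_le_one))
  rw [hder]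
  rcases lt_trichotomy X 0 with hx | hx | hx
  · rw [Real.sign_of_neg hx, Real.sign_of_neg (mul_neg_of_pos_of_neg hs hx)]
  · rw [hx, mul_zero]
  · rw [Real.sign_of_pos hx, Real.sign_of_pos (mul_pos hs hx)]
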